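/- Let r > m > 0 be real numbers. For all (u,v) ∈ ℝ², the point Ĩ_{r,m}(u,v) ∈ ℝ⁶ has Euclidean norm 1, and its first two coordinates satisfy r·Ĩ₁(u,v) + m·Ĩ₂(u,v) = 0. Consequently the bipolar Lawson surface τ̃_{r,m} lies in the intersection of the unit sphere S⁵ with a hyperplane through the origin, i.e., in an equatorial 4-sphere S⁴ ⊂ S⁵. -/

import Mathlib

open Real

open scoped RealInnerProductSpace

/-- The bipolar Lawson immersion `Ĩ_{r,m} : ℝ² → ℝ⁶`, whose image is the bipolar
Lawson surface `τ̃_{r,m}`. -/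
noncomputable def bipolarLawson (r m : ℝ) : ℝ × ℝ → EuclideanSpace ℝ (Fin 6) := fun p =>
  (Real.sqrt (r^2 * Real.cos p.2 ^ 2 + m^2 * Real.sin p.2 ^ 2))⁻¹ •
    (WithLp.toLp 2 ![-(m * Real.sin p.2 * Real.cos p.2),
       r * Real.sin p.2 * Real.cos p.2,
       -(r * Real.cos p.2 ^ 2 * Real.sin (m * p.1) * Real.cos (r * p.1))
         - m * Real.sin p.2 ^ 2 * Real.sin (r * p.1) * Real.cos (m * p.1),
       r * Real.cos p.2 ^ 2 * Real.cos (m * p.1) * Real.sin (r * p.1)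
         + m * Real.sin p.2 ^ 2 * Real.cos (r * p.1) * Real.sin (m * p.1),
       -(r * Real.cos p.2 ^ 2 * Real.sin (m * p.1) * Real.sin (r * p.1))
         + m * Real.sin p.2 ^ 2 * Real.cos (r * p.1) * Real.cos (m * p.1),
       r * Real.cos p.2 ^ 2 * Real.cos (m * p.1) * Real.cos (r * p.1)
         - m * Real.sin p.2 ^ 2 * Real.sin (r * p.1) * Real.sin (m * p.1)] :
      EuclideanSpace ℝ (Fin 6))

/-- `Ĩ_{r,m}(u,v)` has norm 1 and `r·Ĩ₁ + m·Ĩ₂ = 0`: the bipolar Lawson surface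
`τ̃_{r,m}` lies in an equatorial 4-sphere `S⁴ ⊂ S⁵`. -/
theorem bipolarLawson_mem_equatorial_sphere (r m : ℝ) (hm : 0 < m) (hrm : m < r) (u v : ℝ) :
    ‖bipolarLawson r m (u, v)‖ = 1 ∧
    r * bipolarLawson r m (u, v) 0 + m * bipolarLawson r m (u, v) 1 = 0 := by
  have hS : 0 < r^2 * Real.cos v ^ 2 + m^2 * Real.sin v ^ 2 := by
    have h1 := Real.sin_sq_add_cos_sq v
    have h4 : 0 ≤ (r^2 - m^2) * Real.cos v ^ 2 :=
      mul_nonneg (by nlinarith) (sq_nonneg _)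
    have h5 : m^2 * (Real.sin v ^ 2 + Real.cos v ^ 2) = m^2 := by rw [h1]; ring
    nlinarith [pow_pos hm 2]
  have hsqrt : 0 < Real.sqrt (r^2 * Real.cos v ^ 2 + m^2 * Real.sin v ^ 2) := Real.sqrt_pos.2 hS
  set x : EuclideanSpace ℝ (Fin 6) :=
    (WithLp.toLp 2 ![-(m * Real.sin v * Real.cos v),
       r * Real.sin v * Real.cos v,
       -(r * Real.cos v ^ 2 * Real.sin (m * u) * Real.cos (r * u))
         - m * Real.sin v ^ 2 * Real.sin (r * u) * Real.cos (m * u),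
       r * Real.cos v ^ 2 * Real.cos (m * u) * Real.sin (r * u)
         + m * Real.sin v ^ 2 * Real.cos (r * u) * Real.sin (m * u),
       -(r * Real.cos v ^ 2 * Real.sin (m * u) * Real.sin (r * u))
         + m * Real.sin v ^ 2 * Real.cos (r * u) * Real.cos (m * u),
       r * Real.cos v ^ 2 * Real.cos (m * u) * Real.cos (r * u)
         - m * Real.sin v ^ 2 * Real.sin (r * u) * Real.sin (m * u)] :
      EuclideanSpace ℝ (Fin 6)) with hxdef
  have hb : bipolarLawson r m (u, v) =
      (Real.sqrt (r^2 * Real.cos v ^ 2 + m^2 * Real.sin v ^ 2))⁻¹ • x := rfl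
  constructor
  · have hx : ‖x‖ = Real.sqrt (r^2 * Real.cos v ^ 2 + m^2 * Real.sin v ^ 2) := by
      rw [EuclideanSpace.norm_eq x]
      congr 1
      have e0 : x 0 = -(m * Real.sin v * Real.cos v) := rfl
      have e1 : x 1 = r * Real.sin v * Real.cos v := rfl
      have e2 : x 2 = -(r * Real.cos v ^ 2 * Real.sin (m * u) * Real.cos (r * u))
         - m * Real.sin v ^ 2 * Real.sin (r * u) * Real.cos (m * u) := rfl
      have e3 : x 3 = r * Real.cos v ^ 2 * Real.cos (m * u) * Real.sin (r * u)
         + m * Real.sin v ^ 2 * Real.cos (r * u) * Real.sin (m * u) := rfl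
      have e4 : x 4 = -(r * Real.cos v ^ 2 * Real.sin (m * u) * Real.sin (r * u))
         + m * Real.sin v ^ 2 * Real.cos (r * u) * Real.cos (m * u) := rfl
      have e5 : x 5 = r * Real.cos v ^ 2 * Real.cos (m * u) * Real.cos (r * u)
         - m * Real.sin v ^ 2 * Real.sin (r * u) * Real.sin (m * u) := rfl
      simp only [Fin.sum_univ_six, e0, e1, e2, e3, e4, e5, Real.norm_eq_abs, sq_abs]
      have h1 := Real.sin_sq_add_cos_sq v
      have h2 := Real.sin_sq_add_cos_sq (m * u)
      have h3 := Real.sin_sq_add_cos_sq (r * u)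
      linear_combination (r^2 * Real.cos v ^ 2 * Real.cos v ^ 2
          + m^2 * Real.sin v ^ 2 * Real.sin v ^ 2) *
          ((Real.sin (r*u)^2 + Real.cos (r*u)^2) * h2 + h3)
        + (r^2 * Real.cos v ^ 2 + m^2 * Real.sin v ^ 2) * h1
    rw [hb, norm_smul, hx]
    simp only [norm_inv, Real.norm_eq_abs, abs_of_pos hsqrt]
    field_simp
  · rw [hb]
    show r * ((Real.sqrt _)⁻¹ * x 0) + m * ((Real.sqrt _)⁻¹ * x 1) = 0
    have h0 : x 0 = -(m * Real.sin v * Real.cos v) := rfl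
    have h1 : x 1 = r * Real.sin v * Real.cos v := rfl
    rw [h0, h1]
    ring
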